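/- For any k-fold iterate of the operator for production rules: an element ⟦t⃗⟧ρ lies in the i-th component of φᵏ(∅⃗) if and only if the first-order formula P_i^{(k)}(t⃗), the k-fold syntactic unfolding of the inductive predicate P_i, holds in M under ρ. -/

import Mathlib

/-! ### First-order logic with inductively defined predicates (FOL_ID) -/

/-- A first-order signature with ordinary and inductive predicate symbols. -/
structure Signature : Type 1 where
  Func : Type
  arF : Func → ℕ
  Pred : Type
  arP : Pred → ℕ
  IndPred : Type
  arI : IndPred → ℕ

/-- Terms over a signature. -/
inductive Tm (S : Signature) : Type
  | var : ℕ → Tm S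
  | func (f : S.Func) : (Fin (S.arF f) → Tm S) → Tm S

/-- Formulas of FOL_ID. -/
inductive Fm (S : Signature) : Type
  | fals : Fm S
  | eq : Tm S → Tm S → Fm S
  | pred (Q : S.Pred) : (Fin (S.arP Q) → Tm S) → Fm S
  | ind (P : S.IndPred) : (Fin (S.arI P) → Tm S) → Fm S
  | not : Fm S → Fm S
  | and : Fm S → Fm S → Fm S
  | or : Fm S → Fm S → Fm S
  | imp : Fm S → Fm S → Fm S
  | all : ℕ → Fm S → Fm S
  | ex : ℕ → Fm S → Fm S

/-- A first-order structure for a signature. -/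
structure Struc (S : Signature) : Type 1 where
  U : Type
  interpF (f : S.Func) : (Fin (S.arF f) → U) → U
  interpP (Q : S.Pred) : Set (Fin (S.arP Q) → U)
  interpI : Set ((P : S.IndPred) × (Fin (S.arI P) → U))

/-- Evaluation of terms. -/
def Tm.eval {S : Signature} (M : Struc S) (ρ : ℕ → M.U) : Tm S → M.U
  | .var n => ρ n
  | .func f ts => M.interpF f (fun i => (ts i).eval M ρ)

/-- Update of a variable assignment. -/
def update {α : Type} (ρ : ℕ → α) (n : ℕ) (a : α) : ℕ → α :=
  fun m => if m = n then a else ρ m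

/-- Tarskian satisfaction. -/
def Sat {S : Signature} (M : Struc S) (ρ : ℕ → M.U) : Fm S → Prop
  | .fals => False
  | .eq t u => t.eval M ρ = u.eval M ρ
  | .pred Q ts => (fun i => (ts i).eval M ρ) ∈ M.interpP Q
  | .ind P ts => ⟨P, fun i => (ts i).eval M ρ⟩ ∈ M.interpI
  | .not A => ¬ Sat M ρ A
  | .and A B => Sat M ρ A ∧ Sat M ρ B
  | .or A B => Sat M ρ A ∨ Sat M ρ B
  | .imp A B => Sat M ρ A → Sat M ρ B
  | .all n A => ∀ a : M.U, Sat M (update ρ n a) A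
  | .ex n A => ∃ a : M.U, Sat M (update ρ n a) A

/-- Free variables of a term. -/
def Tm.fv {S : Signature} : Tm S → Finset ℕ
  | .var n => {n}
  | .func _ ts => Finset.univ.biUnion (fun i => (ts i).fv)

/-- Free variables of a formula. -/
def Fm.fv {S : Signature} : Fm S → Finset ℕ
  | .fals => ∅
  | .eq t u => t.fv ∪ u.fv
  | .pred _ ts => Finset.univ.biUnion (fun i => (ts i).fv)
  | .ind _ ts => Finset.univ.biUnion (fun i => (ts i).fv)
  | .not A => A.fv
  | .and A B => A.fv ∪ B.fv
  | .or A B => A.fv ∪ B.fv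
  | .imp A B => A.fv ∪ B.fv
  | .all n A => A.fv.erase n
  | .ex n A => A.fv.erase n

/-- Simultaneous substitution on terms. -/
def Tm.subst {S : Signature} (σ : ℕ → Tm S) : Tm S → Tm S
  | .var n => σ n
  | .func f ts => .func f (fun i => (ts i).subst σ)

/-- Substitution of a (closed) term for a variable in a formula. -/
def Fm.substC {S : Signature} (x : ℕ) (t : Tm S) : Fm S → Fm S
  | .fals => .fals
  | .eq a b => .eq (a.subst (fun n => if n = x then t else .var n))
      (b.subst (fun n => if n = x then t else .var n))
  | .pred Q ts => .pred Q (fun i => (ts i).subst (fun n => if n = x then t else .var n))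
  | .ind P ts => .ind P (fun i => (ts i).subst (fun n => if n = x then t else .var n))
  | .not A => .not (A.substC x t)
  | .and A B => .and (A.substC x t) (B.substC x t)
  | .or A B => .or (A.substC x t) (B.substC x t)
  | .imp A B => .imp (A.substC x t) (B.substC x t)
  | .all n A => if n = x then .all n A else .all n (A.substC x t)
  | .ex n A => if n = x then .ex n A else .ex n (A.substC x t)

/-- A production rule for inductive predicates. -/
structure ProdRule (S : Signature) : Type where
  concl : S.IndPred
  conclArgs : Fin (S.arI concl) → Tm S
  ordPrems : List ((Q : S.Pred) × (Fin (S.arP Q) → Tm S))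
  indPrems : List ((P : S.IndPred) × (Fin (S.arI P) → Tm S))

/-- The monotone operator determined by a set of production rules over a structure. -/
def step {S : Signature} (M : Struc S) (Φ : List (ProdRule S))
    (X : Set ((P : S.IndPred) × (Fin (S.arI P) → M.U))) :
    Set ((P : S.IndPred) × (Fin (S.arI P) → M.U)) :=
  { v | ∃ r ∈ Φ, ∃ ρ : ℕ → M.U,
      (∀ q ∈ r.ordPrems, (fun i => (q.2 i).eval M ρ) ∈ M.interpP q.1) ∧
      (∀ p ∈ r.indPrems, ⟨p.1, fun i => (p.2 i).eval M ρ⟩ ∈ X) ∧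
      v = ⟨r.concl, fun i => (r.conclArgs i).eval M ρ⟩ }

theorem step_mono {S : Signature} (M : Struc S) (Φ : List (ProdRule S)) :
    Monotone (step M Φ) := by
  rintro X Y h v ⟨r, hr, ρ, hq, hp, hv⟩
  exact ⟨r, hr, ρ, hq, fun p hp' => h (hp p hp'), hv⟩

/-- The operator for the production rules, as an order homomorphism. -/
def stepHom {S : Signature} (M : Struc S) (Φ : List (ProdRule S)) :
    Set ((P : S.IndPred) × (Fin (S.arI P) → M.U)) →o
      Set ((P : S.IndPred) × (Fin (S.arI P) → M.U)) :=
  ⟨step M Φ, step_mono M Φ⟩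

/-- A structure is a standard model for `(S, Φ)` if it interprets the inductive
predicates by the least fixpoint of the operator for `Φ`. -/
def Standard {S : Signature} (M : Struc S) (Φ : List (ProdRule S)) : Prop :=
  M.interpI = OrderHom.lfp (stepHom M Φ)

/-- The variables occurring in a production rule. -/
def ProdRule.vars {S : Signature} (r : ProdRule S) : Finset ℕ :=
  (Finset.univ.biUnion fun i => (r.conclArgs i).fv) ∪
    (r.ordPrems.foldr (fun q s => s ∪ Finset.univ.biUnion fun i => (q.2 i).fv) ∅) ∪
    (r.indPrems.foldr (fun p s => s ∪ Finset.univ.biUnion fun i => (p.2 i).fv) ∅)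

def bigAnd {S : Signature} : List (Fm S) → Fm S
  | [] => .not .fals
  | A :: l => .and A (bigAnd l)

def bigOr {S : Signature} : List (Fm S) → Fm S
  | [] => .fals
  | A :: l => .or A (bigOr l)

def exList {S : Signature} : List ℕ → Fm S → Fm S
  | [], A => A
  | n :: l, A => .ex n (exList l A)

/-- The `k`-fold syntactic unfolding `P^{(k)}(t⃗)` of an inductive predicate:
`P^{(0)}(t⃗) ≡ ⊥` and `P^{(k+1)}(t⃗)` is the disjunction, over production rules with
conclusion `P t⃗₀`, of `∃y⃗ (t⃗ = t⃗₀ ∧ ⋀ Q_l u⃗_l ∧ ⋀ P_{j_p}^{(k)}(t⃗_p))`, with the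
rule variables `y⃗` renamed to be fresh for `t⃗`. -/
def unfold {S : Signature} [DecidableEq S.IndPred] (Φ : List (ProdRule S)) :
    ℕ → (P : S.IndPred) → (Fin (S.arI P) → Tm S) → Fm S
  | 0, _, _ => .fals
  | (k+1), P, ts =>
    bigOr (Φ.map fun r =>
      if h : r.concl = P then
        let N : ℕ := ((Finset.univ.biUnion fun i => (ts i).fv).sup id) + 1
        let σ : ℕ → Tm S := fun n => .var (n + N)
        exList ((r.vars.sort (· ≤ ·)).map (· + N))
          (.and (bigAnd ((List.finRange (S.arI P)).map fun i =>
              .eq (ts i) (((h ▸ r.conclArgs) i).subst σ)))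
            (.and (bigAnd (r.ordPrems.map fun q => .pred q.1 fun i => (q.2 i).subst σ))
              (bigAnd (r.indPrems.map fun p => unfold Φ k p.1 fun i => (p.2 i).subst σ))))
      else .fals)

section Aux

variable {S : Signature}

lemma eval_congr (M : Struc S) {ρ ρ' : ℕ → M.U} :
    ∀ t : Tm S, (∀ n ∈ t.fv, ρ n = ρ' n) → t.eval M ρ = t.eval M ρ'
  | .var n, h => h n (by simp [Tm.fv])
  | .func f ts, h => by
      simp only [Tm.eval]
      congr 1; funext i
      exact eval_congr M (ts i) (fun n hn => h n (by
        simp only [Tm.fv, Finset.mem_biUnion, Finset.mem_univ]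
        exact ⟨i, trivial, hn⟩))

lemma eval_subst (M : Struc S) (σ : ℕ → Tm S) (ρ : ℕ → M.U) :
    ∀ t : Tm S, (t.subst σ).eval M ρ = t.eval M (fun n => (σ n).eval M ρ)
  | .var n => rfl
  | .func f ts => by
      simp only [Tm.subst, Tm.eval]
      congr 1; funext i
      exact eval_subst M σ ρ (ts i)

lemma sat_bigAnd (M : Struc S) (ρ : ℕ → M.U) (l : List (Fm S)) :
    Sat M ρ (bigAnd l) ↔ ∀ A ∈ l, Sat M ρ A := by
  induction l with
  | nil => simp [bigAnd, Sat]
  | cons A l ih => simp [bigAnd, Sat, ih]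

lemma sat_bigOr (M : Struc S) (ρ : ℕ → M.U) (l : List (Fm S)) :
    Sat M ρ (bigOr l) ↔ ∃ A ∈ l, Sat M ρ A := by
  induction l with
  | nil => simp [bigOr, Sat]
  | cons A l ih => simp [bigOr, Sat, ih]

lemma sat_exList (M : Struc S) :
    ∀ (l : List ℕ) (ρ : ℕ → M.U) (A : Fm S),
    Sat M ρ (exList l A) ↔ ∃ ρ' : ℕ → M.U, (∀ m, m ∉ l → ρ' m = ρ m) ∧ Sat M ρ' A := by
  intro l
  induction l with
  | nil =>
    intro ρ A
    constructor
    · intro h; exact ⟨ρ, fun _ _ => rfl, h⟩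
    · rintro ⟨ρ', h1, h2⟩
      have : ρ' = ρ := funext fun m => h1 m (by simp)
      rw [this] at h2; exact h2
  | cons n l ih =>
    intro ρ A
    show (∃ a, Sat M (update ρ n a) (exList l A)) ↔ _
    constructor
    · rintro ⟨a, ha⟩
      obtain ⟨ρ', h1, h2⟩ := (ih _ _).1 ha
      refine ⟨ρ', fun m hm => ?_, h2⟩
      have hmn : m ≠ n := fun h => hm (h ▸ (List.mem_cons_self : n ∈ n :: l))
      rw [h1 m (fun h => hm (List.mem_cons_of_mem _ h)), update, if_neg hmn]
    · rintro ⟨ρ', h1, h2⟩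
      refine ⟨ρ' n, (ih _ _).2 ⟨ρ', fun m hm => ?_, h2⟩⟩
      by_cases hmn : m = n
      · subst hmn; simp [update]
      · rw [h1 m (by simp [hmn, List.mem_cons]; exact fun h => (hm h).elim), update, if_neg hmn]

lemma fv_subset_foldr {α : Type} (g : α → Finset ℕ) :
    ∀ (L : List α) (q : α), q ∈ L → g q ⊆ L.foldr (fun q s => s ∪ g q) ∅ := by
  intro L
  induction L with
  | nil => intro q h; simp at h
  | cons a L ih =>
    intro q h
    rcases List.mem_cons.mp h with h | h
    · subst h; exact Finset.subset_union_right
    · exact (ih q h).trans Finset.subset_union_left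

lemma vars_concl (r : ProdRule S) (i : Fin (S.arI r.concl)) :
    (r.conclArgs i).fv ⊆ r.vars := by
  intro n hn
  apply Finset.mem_union_left
  apply Finset.mem_union_left
  exact Finset.mem_biUnion.mpr ⟨i, Finset.mem_univ i, hn⟩

lemma vars_ord (r : ProdRule S) (q : (Q : S.Pred) × (Fin (S.arP Q) → Tm S))
    (hq : q ∈ r.ordPrems) (i : Fin (S.arP q.1)) : (q.2 i).fv ⊆ r.vars := by
  intro n hn
  apply Finset.mem_union_left
  apply Finset.mem_union_right
  exact fv_subset_foldr
    (g := fun (q : (Q : S.Pred) × (Fin (S.arP Q) → Tm S)) => Finset.univ.biUnion fun j => (q.2 j).fv)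
    r.ordPrems q hq (Finset.mem_biUnion.mpr ⟨i, Finset.mem_univ i, hn⟩)

lemma vars_ind (r : ProdRule S) (p : (P : S.IndPred) × (Fin (S.arI P) → Tm S))
    (hp : p ∈ r.indPrems) (i : Fin (S.arI p.1)) : (p.2 i).fv ⊆ r.vars := by
  intro n hn
  apply Finset.mem_union_right
  exact fv_subset_foldr
    (g := fun (p : (P : S.IndPred) × (Fin (S.arI P) → Tm S)) => Finset.univ.biUnion fun j => (p.2 j).fv)
    r.indPrems p hp (Finset.mem_biUnion.mpr ⟨i, Finset.mem_univ i, hn⟩)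

end Aux

/-- an element `⟦t⃗⟧ρ` lies in the `P`-component of the `k`-th iterate
`φ^[k] ∅` of the operator for the production rules iff the `k`-fold syntactic
unfolding `P^{(k)}(t⃗)` holds in `M` under `ρ`. -/
theorem stmt2 {S : Signature} [DecidableEq S.IndPred] (Φ : List (ProdRule S))
    (M : Struc S) (k : ℕ) (P : S.IndPred) (ts : Fin (S.arI P) → Tm S) (ρ : ℕ → M.U) :
    (⟨P, fun i => (ts i).eval M ρ⟩ ∈ (step M Φ)^[k] ∅) ↔ Sat M ρ (unfold Φ k P ts) := by
  classical
  induction k generalizing P ts ρ with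
  | zero => simp [unfold, Sat]
  | succ k ih =>
    rw [Function.iterate_succ_apply']
    simp only [unfold]
    rw [sat_bigOr]
    simp only [List.mem_map, exists_exists_and_eq_and]
    show (∃ r ∈ Φ, ∃ ρ₀ : ℕ → M.U,
      (∀ q ∈ r.ordPrems, (fun i => (q.2 i).eval M ρ₀) ∈ M.interpP q.1) ∧
      (∀ p ∈ r.indPrems, ⟨p.1, fun i => (p.2 i).eval M ρ₀⟩ ∈ (step M Φ)^[k] ∅) ∧
      (⟨P, fun i => (ts i).eval M ρ⟩ :
        (P : S.IndPred) × (Fin (S.arI P) → M.U)) =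
        ⟨r.concl, fun i => (r.conclArgs i).eval M ρ₀⟩) ↔ _
    refine exists_congr fun r => and_congr_right fun hr => ?_
    by_cases h : r.concl = P
    · subst h
      rw [dif_pos rfl, sat_exList]
      have htsN : ∀ (i : Fin (S.arI r.concl)) n, n ∈ (ts i).fv →
          n < (Finset.univ.biUnion fun i => (ts i).fv).sup id + 1 := by
        intro i n hn
        have : n ≤ (Finset.univ.biUnion fun i => (ts i).fv).sup id :=
          Finset.le_sup (f := id) (Finset.mem_biUnion.mpr ⟨i, Finset.mem_univ i, hn⟩)
        omega
      set N : ℕ := (Finset.univ.biUnion fun i => (ts i).fv).sup id + 1 with hN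
      have hLmem : ∀ m, m ∈ (r.vars.sort (fun x1 x2 => x1 ≤ x2)).map (fun x => x + N) ↔
          N ≤ m ∧ m - N ∈ r.vars := by
        intro m
        simp only [List.mem_map, Finset.mem_sort]
        constructor
        · rintro ⟨v, hv, rfl⟩
          exact ⟨Nat.le_add_left _ _, by simpa using hv⟩
        · rintro ⟨h1, h2⟩
          exact ⟨m - N, h2, Nat.sub_add_cancel h1⟩
      constructor
      · rintro ⟨ρ₀, hord, hind, heq⟩
        have hfun : (fun i => (ts i).eval M ρ) = fun i => (r.conclArgs i).eval M ρ₀ :=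
          eq_of_heq (Sigma.mk.inj_iff.mp heq).2
        refine ⟨fun m => if N ≤ m ∧ m - N ∈ r.vars then ρ₀ (m - N) else ρ m,
          fun m hm => if_neg fun hc => hm ((hLmem m).mpr hc), ?_⟩
        have hσ : ∀ t : Tm S, t.fv ⊆ r.vars →
            (t.subst fun n => Tm.var (n + N)).eval M
              (fun m => if N ≤ m ∧ m - N ∈ r.vars then ρ₀ (m - N) else ρ m) = t.eval M ρ₀ := by
          intro t ht
          rw [eval_subst]
          refine eval_congr M t fun n hn => ?_
          show (if N ≤ n + N ∧ n + N - N ∈ r.vars then ρ₀ (n + N - N) else ρ (n + N)) = ρ₀ n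
          rw [if_pos ⟨Nat.le_add_left _ _, by rw [Nat.add_sub_cancel]; exact ht hn⟩,
            Nat.add_sub_cancel]
        have hts' : ∀ i : Fin (S.arI r.concl), (ts i).eval M
            (fun m => if N ≤ m ∧ m - N ∈ r.vars then ρ₀ (m - N) else ρ m) = (ts i).eval M ρ := by
          intro i
          refine (eval_congr M (ts i) fun n hn => ?_).symm
          exact (if_neg fun hc => Nat.lt_irrefl n (Nat.lt_of_lt_of_le (htsN i n hn) hc.1)).symm
        refine ⟨?_, ?_, ?_⟩
        · rw [sat_bigAnd]
          intro A hA
          obtain ⟨i, -, rfl⟩ := List.mem_map.mp hA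
          show (ts i).eval M (fun m => if N ≤ m ∧ m - N ∈ r.vars then ρ₀ (m - N) else ρ m) =
            ((r.conclArgs i).subst fun n => Tm.var (n + N)).eval M
              (fun m => if N ≤ m ∧ m - N ∈ r.vars then ρ₀ (m - N) else ρ m)
          rw [hts' i, hσ (r.conclArgs i) (vars_concl r i)]
          exact congrFun hfun i
        · rw [sat_bigAnd]
          intro A hA
          obtain ⟨q, hq, rfl⟩ := List.mem_map.mp hA
          have e : (fun i => ((q.2 i).subst fun n => Tm.var (n + N)).eval M
              (fun m => if N ≤ m ∧ m - N ∈ r.vars then ρ₀ (m - N) else ρ m)) =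
              fun i => (q.2 i).eval M ρ₀ :=
            funext fun i => hσ (q.2 i) (vars_ord r q hq i)
          show (fun i => ((q.2 i).subst fun n => Tm.var (n + N)).eval M
              (fun m => if N ≤ m ∧ m - N ∈ r.vars then ρ₀ (m - N) else ρ m)) ∈ M.interpP q.1
          rw [e]
          exact hord q hq
        · rw [sat_bigAnd]
          intro A hA
          obtain ⟨p, hp, rfl⟩ := List.mem_map.mp hA
          rw [← ih]
          have e : (fun i => ((p.2 i).subst fun n => Tm.var (n + N)).eval M
              (fun m => if N ≤ m ∧ m - N ∈ r.vars then ρ₀ (m - N) else ρ m)) =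
              fun i => (p.2 i).eval M ρ₀ :=
            funext fun i => hσ (p.2 i) (vars_ind r p hp i)
          show (⟨p.1, fun i => ((p.2 i).subst fun n => Tm.var (n + N)).eval M
              (fun m => if N ≤ m ∧ m - N ∈ r.vars then ρ₀ (m - N) else ρ m)⟩ :
              (P : S.IndPred) × (Fin (S.arI P) → M.U)) ∈ (step M Φ)^[k] ∅
          rw [e]
          exact hind p hp
      · rintro ⟨ρ', hagree, hEq, hOrd, hInd⟩
        refine ⟨fun n => ρ' (n + N), ?_, ?_, ?_⟩
        · intro q hq
          rw [sat_bigAnd] at hOrd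
          have hq' := hOrd _ (List.mem_map.mpr ⟨q, hq, rfl⟩)
          have e : (fun i => ((q.2 i).subst fun n => Tm.var (n + N)).eval M ρ') =
              fun i => (q.2 i).eval M (fun n => ρ' (n + N)) :=
            funext fun i => eval_subst M _ ρ' (q.2 i)
          exact e ▸ hq'
        · intro p hp
          rw [sat_bigAnd] at hInd
          have hp' := hInd _ (List.mem_map.mpr ⟨p, hp, rfl⟩)
          rw [← ih] at hp'
          have e : (fun i => ((p.2 i).subst fun n => Tm.var (n + N)).eval M ρ') =
              fun i => (p.2 i).eval M (fun n => ρ' (n + N)) :=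
            funext fun i => eval_subst M _ ρ' (p.2 i)
          exact e ▸ hp'
        · rw [sat_bigAnd] at hEq
          refine congrArg (fun f => (⟨r.concl, f⟩ : (P : S.IndPred) × (Fin (S.arI P) → M.U)))
            (funext fun i => ?_)
          have hi := hEq _ (List.mem_map.mpr ⟨i, List.mem_finRange i, rfl⟩)
          have h1 : (ts i).eval M ρ' = (ts i).eval M ρ :=
            eval_congr M (ts i) fun n hn => hagree n fun hmem =>
              Nat.lt_irrefl n (Nat.lt_of_lt_of_le (htsN i n hn) ((hLmem n).mp hmem).1)
          have h2 : ((r.conclArgs i).subst fun n => Tm.var (n + N)).eval M ρ' =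
              (r.conclArgs i).eval M (fun n => ρ' (n + N)) := eval_subst M _ ρ' _
          rw [← h1, ← h2]
          exact hi
    · rw [dif_neg h]
      constructor
      · rintro ⟨ρ₀, -, -, heq⟩
        exact absurd (congrArg Sigma.fst heq).symm h
      · intro hf; exact hf.elim
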